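/- arXiv:0808.3646 — 2 statements merged into one kernel-verified Lean document; each statement's English description precedes it below -/
import Mathlib

section
/- Finite type invariants of degree n separate cyclic equivalence classes of signed words with at most n letters: if w₁ and w₂ are signed words with at most n letters each and v(w₁) = v(w₂) for every finite type invariant v of degree ≤ n, then w₁ and w₂ are cyclically equivalent. -/
/-- Letters are indexed by natural numbers; a signed letter carries a sign
(`true` = `+`, `false` = `−`). -/
abbrev Letter : Type := ℕ × Bool

/-- A signed word: every entry occurs exactly twice, and the two occurrences of
any letter carry the same sign. -/
def IsSignedWord (w : List Letter) : Prop :=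
  ∀ p ∈ w, w.count p = 2 ∧ ∀ q ∈ w, q.1 = p.1 → q.2 = p.2

/-- Signed words (concrete representatives; isomorphism is subsumed by cyclic
equivalence below). -/
def SignedWord : Type := {w : List Letter // IsSignedWord w}

/-- The set of letters occurring in a list of signed letters. -/
def lettersL (w : List Letter) : Finset ℕ := (w.map Prod.fst).toFinset

/-- The set of letters of a signed word. -/
def SignedWord.letters (w : SignedWord) : Finset ℕ := lettersL w.1

/-- The number of (distinct) letters of a signed word. -/
def SignedWord.numLetters (w : SignedWord) : ℕ := w.letters.card

theorem isSignedWord_filter (q : ℕ → Bool) {w : List Letter} (hw : IsSignedWord w) :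
    IsSignedWord (w.filter fun p => q p.1) := by
  intro p hp
  rw [List.mem_filter] at hp
  refine ⟨?_, fun r hr => (hw p hp.1).2 r (List.mem_filter.mp hr).1⟩
  rw [List.count_filter (p := fun r : Letter => q r.1) hp.2]
  exact (hw p hp.1).1

/-- Delete both occurrences of every letter of `T` from `w`. -/
def SignedWord.delete (w : SignedWord) (T : Finset ℕ) : SignedWord :=
  ⟨w.1.filter fun p => decide (p.1 ∉ T), isSignedWord_filter (fun a => decide (a ∉ T)) w.2⟩

/-- The induced signed subword of `w` on a set `U` of letters. -/
def SignedWord.restrict (w : SignedWord) (U : Finset ℕ) : SignedWord :=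
  ⟨w.1.filter fun p => decide (p.1 ∈ U), isSignedWord_filter (fun a => decide (a ∈ U)) w.2⟩

/-- Sign-preserving relabeling of letters. -/
def Iso (w w' : List Letter) : Prop :=
  ∃ f : ℕ ≃ ℕ, w' = w.map fun p => (f p.1, p.2)

/-- The basic move `A^ε x A^ε y ↦ x A^(−ε) y A^(−ε)`. -/
def Move (w w' : List Letter) : Prop :=
  ∃ (a : ℕ) (s : Bool) (x y : List Letter),
    w = (a, s) :: (x ++ (a, s) :: y) ∧ w' = x ++ (a, !s) :: (y ++ [(a, !s)])

/-- Cyclic equivalence of signed words: the equivalence relation generated by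
isomorphism together with the basic move. -/
def CyclicEquivL : List Letter → List Letter → Prop :=
  Relation.EqvGen fun w w' => Iso w w' ∨ Move w w'

/-- Cyclic equivalence of signed words. -/
def SignedWord.CyclicEquiv (w w' : SignedWord) : Prop := CyclicEquivL w.1 w'.1

/-- A cyclic equivalence invariant with values in `F`. -/
def WordInvariant (F : Type*) [Field F] (v : SignedWord → F) : Prop :=
  ∀ w w' : SignedWord, w.CyclicEquiv w' → v w = v w'

/-- The prolongation of `v` to the singular signed word `(w, S)` (the letters of
`S` being declared singular), given by inclusion–exclusion. -/
def prolong (F : Type*) [Field F] (v : SignedWord → F) (w : SignedWord) (S : Finset ℕ) : F :=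
  ∑ T ∈ S.powerset, (-1 : F) ^ T.card * v (w.delete T)

/-- `v` is a finite type invariant of degree ≤ `n`: it is a cyclic equivalence
invariant whose prolongation vanishes on every singular signed word with more
than `n` singular letters. -/
def FiniteTypeLe (F : Type*) [Field F] (n : ℕ) (v : SignedWord → F) : Prop :=
  WordInvariant F v ∧
    ∀ (w : SignedWord) (S : Finset ℕ), S ⊆ w.letters → n < S.card →
      prolong F v w S = 0

/-- The empty signed word `φ`. -/
def wordEmpty : SignedWord := ⟨[], by intro p hp; simp at hp⟩

/-- The one-letter positive signed word `AA`. -/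
def wordAA : SignedWord := ⟨[(0, true), (0, true)], by unfold IsSignedWord; decide⟩

/-- The one-letter negative signed word `ĀĀ`. -/
def wordAAneg : SignedWord := ⟨[(0, false), (0, false)], by unfold IsSignedWord; decide⟩

/-- The two-letter signed word `AABB`. -/
def wordAABB : SignedWord := ⟨[(0, true), (0, true), (1, true), (1, true)], by unfold IsSignedWord; decide⟩

/-- The two-letter signed word `AAB̄B̄`. -/
def wordAABnBn : SignedWord := ⟨[(0, true), (0, true), (1, false), (1, false)], by unfold IsSignedWord; decide⟩

/-- The two-letter signed word `AB̄B̄A`. -/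
def wordABnBnA : SignedWord := ⟨[(0, true), (1, false), (1, false), (0, true)], by unfold IsSignedWord; decide⟩

/-- The two-letter signed word `ABAB`. -/
def wordABAB : SignedWord := ⟨[(0, true), (1, true), (0, true), (1, true)], by unfold IsSignedWord; decide⟩

/-- The underlying list of the word `A₁A₁A₂A₂…AₙAₙ` (all letters positive). -/
def wListN (n : ℕ) : List Letter := (List.range n).flatMap fun i => [(i, true), (i, true)]

/-- `Ncount u w`: the number of `k`-element subsets of the letters of `w`
(`k` = number of letters of `u`) whose induced signed subword is cyclically
equivalent to (an isomorphic copy of) `u`. -/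
noncomputable def Ncount (u w : SignedWord) : ℕ := by
  classical
  exact (w.letters.powerset.filter fun U =>
    U.card = u.numLetters ∧ (w.restrict U).CyclicEquiv u).card

theorem prolong_add (F : Type*) [Field F] (v₁ v₂ : SignedWord → F) (w : SignedWord) (S : Finset ℕ) :
    prolong F (v₁ + v₂) w S = prolong F v₁ w S + prolong F v₂ w S := by
  simp [prolong, ← Finset.sum_add_distrib, mul_add]

theorem prolong_smul (F : Type*) [Field F] (c : F) (v : SignedWord → F) (w : SignedWord) (S : Finset ℕ) :
    prolong F (c • v) w S = c * prolong F v w S := by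
  rw [prolong, prolong, Finset.mul_sum]
  exact Finset.sum_congr rfl fun T _ => by simp [mul_left_comm]

/-- The `F`-vector space `Vₙ` of finite type invariants of degree ≤ `n`. -/
def Vn (F : Type*) [Field F] (n : ℕ) : Submodule F (SignedWord → F) where
  carrier := {v | FiniteTypeLe F n v}
  add_mem' := by
    rintro v₁ v₂ ⟨h1, h1'⟩ ⟨h2, h2'⟩
    refine ⟨fun w w' h => by simp [h1 w w' h, h2 w w' h], fun w S hS hc => ?_⟩
    rw [prolong_add, h1' w S hS hc, h2' w S hS hc, add_zero]
  zero_mem' := ⟨fun _ _ _ => rfl, fun w S hS hc => by simp [prolong]⟩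
  smul_mem' := by
    rintro c v ⟨h, h'⟩
    refine ⟨fun w w' hww => by simp [h w w' hww], fun w S hS hc => ?_⟩
    rw [prolong_smul, h' w S hS hc, mul_zero]

/-- Cyclic equivalence as a setoid on signed words. -/
def cycSetoid : Setoid SignedWord :=
  ⟨SignedWord.CyclicEquiv, fun w => Relation.EqvGen.refl w.1,
    fun h => Relation.EqvGen.symm _ _ h, fun h h' => Relation.EqvGen.trans _ _ _ h h'⟩


section Separation

open Finset

lemma mem_lettersL {a : ℕ} {l : List Letter} : a ∈ lettersL l ↔ ∃ p ∈ l, p.1 = a := by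
  simp [lettersL, List.mem_map]

lemma lettersL_filter (U : Finset ℕ) (l : List Letter) :
    lettersL (l.filter fun p => decide (p.1 ∈ U)) = lettersL l ∩ U := by
  ext a
  simp only [mem_lettersL, List.mem_filter, Finset.mem_inter, decide_eq_true_eq]
  constructor
  · rintro ⟨p, ⟨hp, hU⟩, rfl⟩; exact ⟨⟨p, hp, rfl⟩, hU⟩
  · rintro ⟨⟨p, hp, rfl⟩, hU⟩; exact ⟨p, ⟨hp, hU⟩, rfl⟩

lemma SignedWord.letters_restrict (w : SignedWord) {U : Finset ℕ} (hU : U ⊆ w.letters) :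
    (w.restrict U).letters = U := by
  show lettersL (w.1.filter fun p => decide (p.1 ∈ U)) = U
  rw [lettersL_filter]
  exact Finset.inter_eq_right.mpr hU

lemma SignedWord.numLetters_restrict (w : SignedWord) {U : Finset ℕ} (hU : U ⊆ w.letters) :
    (w.restrict U).numLetters = U.card := by
  rw [SignedWord.numLetters, w.letters_restrict hU]

lemma SignedWord.letters_delete (w : SignedWord) (T : Finset ℕ) :
    (w.delete T).letters = w.letters \ T := by
  ext a
  show a ∈ lettersL (w.1.filter fun p => decide (p.1 ∉ T)) ↔ _
  rw [Finset.mem_sdiff]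
  simp only [mem_lettersL, List.mem_filter, decide_eq_true_eq, SignedWord.letters]
  constructor
  · rintro ⟨p, ⟨hp, hT⟩, rfl⟩; exact ⟨⟨p, hp, rfl⟩, hT⟩
  · rintro ⟨⟨p, hp, rfl⟩, hT⟩; exact ⟨p, ⟨hp, hT⟩, rfl⟩

lemma restrict_delete (w : SignedWord) {T U : Finset ℕ} (hd : Disjoint U T) :
    (w.delete T).restrict U = w.restrict U := by
  apply Subtype.ext
  show ((w.1.filter fun p => decide (p.1 ∉ T)).filter fun p => decide (p.1 ∈ U))
      = w.1.filter fun p => decide (p.1 ∈ U)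
  rw [List.filter_filter]
  apply List.filter_congr
  intro p _
  by_cases h : p.1 ∈ U
  · simp [h, Finset.disjoint_left.mp hd h]
  · simp [h]

lemma restrict_letters_self (w : SignedWord) : w.restrict w.letters = w := by
  apply Subtype.ext
  show (w.1.filter fun p => decide (p.1 ∈ w.letters)) = w.1
  rw [List.filter_eq_self]
  intro p hp
  have hm : p.1 ∈ w.letters := mem_lettersL.mpr ⟨p, hp, rfl⟩
  simpa using hm

end Separation
section Separation2

open Finset

lemma image_equiv_image_symm (σ : ℕ ≃ ℕ) (U : Finset ℕ) :
    (U.image σ).image σ.symm = U := by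
  rw [Finset.image_image]; ext b; simp

lemma image_symm_image (σ : ℕ ≃ ℕ) (U : Finset ℕ) :
    (U.image σ.symm).image σ = U := by
  rw [Finset.image_image]; ext b; simp

lemma cyclicEquivL_restrict {w w' : List Letter} (h : CyclicEquivL w w') :
    ∃ σ : ℕ ≃ ℕ, lettersL w' = (lettersL w).image σ ∧
      ∀ U : Finset ℕ, CyclicEquivL (w.filter fun p => decide (p.1 ∈ U))
        (w'.filter fun p => decide (p.1 ∈ U.image σ)) := by
  induction h with
  | rel x y hxy =>
    rcases hxy with ⟨f, rfl⟩ | ⟨a, s, xs, ys, rfl, rfl⟩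
    · refine ⟨f, ?_, fun U => ?_⟩
      · ext b
        simp only [mem_lettersL, List.mem_map, Finset.mem_image]
        constructor
        · rintro ⟨p, ⟨q, hq, rfl⟩, rfl⟩; exact ⟨q.1, ⟨q, hq, rfl⟩, rfl⟩
        · rintro ⟨c, ⟨q, hq, rfl⟩, rfl⟩; exact ⟨(f q.1, q.2), ⟨q, hq, rfl⟩, rfl⟩
      · apply Relation.EqvGen.rel
        left
        refine ⟨f, ?_⟩
        rw [List.filter_map]
        congr 1
        apply List.filter_congr
        intro p _
        simp [Function.comp, f.injective.mem_finset_image]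
    · refine ⟨Equiv.refl ℕ, ?_, fun U => ?_⟩
      · have lc : ∀ (p : Letter) (l : List Letter), lettersL (p :: l) = insert p.1 (lettersL l) := by
          intro p l; simp [lettersL]
        have la : ∀ (l l' : List Letter), lettersL (l ++ l') = lettersL l ∪ lettersL l' := by
          intro l l'; simp [lettersL]
        have ln : lettersL [] = ∅ := rfl
        simp only [lc, la, ln, Equiv.coe_refl, Finset.image_id]
        ext b
        simp only [Finset.mem_union, Finset.mem_insert, Finset.notMem_empty]
        tauto
      · have hU : U.image (Equiv.refl ℕ) = U := by simp
        rw [hU]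
        by_cases ha : a ∈ U
        · have h1 : (((a, s) :: (xs ++ (a, s) :: ys)).filter fun p => decide (p.1 ∈ U))
              = (a, s) :: ((xs.filter fun p => decide (p.1 ∈ U)) ++
                  (a, s) :: (ys.filter fun p => decide (p.1 ∈ U))) := by
            simp [List.filter_cons, List.filter_append, ha]
          have h2 : ((xs ++ (a, !s) :: (ys ++ [(a, !s)])).filter fun p => decide (p.1 ∈ U))
              = (xs.filter fun p => decide (p.1 ∈ U)) ++
                  (a, !s) :: ((ys.filter fun p => decide (p.1 ∈ U)) ++ [(a, !s)]) := by
            simp [List.filter_cons, List.filter_append, ha]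
          rw [h1, h2]
          exact Relation.EqvGen.rel _ _ (Or.inr ⟨a, s, _, _, rfl, rfl⟩)
        · have h1 : (((a, s) :: (xs ++ (a, s) :: ys)).filter fun p => decide (p.1 ∈ U))
              = (xs.filter fun p => decide (p.1 ∈ U)) ++ (ys.filter fun p => decide (p.1 ∈ U)) := by
            simp [List.filter_cons, List.filter_append, ha]
          have h2 : ((xs ++ (a, !s) :: (ys ++ [(a, !s)])).filter fun p => decide (p.1 ∈ U))
              = (xs.filter fun p => decide (p.1 ∈ U)) ++ (ys.filter fun p => decide (p.1 ∈ U)) := by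
            simp [List.filter_cons, List.filter_append, ha]
          rw [h1, h2]
          exact Relation.EqvGen.refl _
  | refl x =>
    refine ⟨Equiv.refl ℕ, by simp, fun U => ?_⟩
    have hU : U.image (Equiv.refl ℕ) = U := by simp
    rw [hU]
    exact Relation.EqvGen.refl _
  | symm x y _ ih =>
    obtain ⟨σ, h1, h2⟩ := ih
    refine ⟨σ.symm, ?_, fun U => ?_⟩
    · rw [h1, image_equiv_image_symm]
    · have := h2 (U.image σ.symm)
      rw [image_symm_image] at this
      exact Relation.EqvGen.symm _ _ this
  | trans x y z _ _ ih1 ih2 =>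
    obtain ⟨σ₁, h1, h2⟩ := ih1
    obtain ⟨σ₂, g1, g2⟩ := ih2
    refine ⟨σ₁.trans σ₂, ?_, fun U => ?_⟩
    · rw [g1, h1, Finset.image_image, Equiv.coe_trans]
    · have := g2 (U.image σ₁)
      rw [Finset.image_image, ← Equiv.coe_trans] at this
      exact Relation.EqvGen.trans _ _ _ (h2 U) this

lemma SignedWord.cyclicEquiv_restrict {w w' : SignedWord} (h : w.CyclicEquiv w') :
    ∃ σ : ℕ ≃ ℕ, w'.letters = w.letters.image σ ∧
      ∀ U : Finset ℕ, (w.restrict U).CyclicEquiv (w'.restrict (U.image σ)) :=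
  cyclicEquivL_restrict h

end Separation2
section Separation3

open Finset

open Classical in
noncomputable def gFun (F : Type*) [Field F] (n : ℕ) (w₁ : SignedWord) (u : SignedWord) : F :=
  if u.numLetters ≤ n then
    (if u.CyclicEquiv w₁ then (1 : F) else 0) -
      ∑ U ∈ (u.letters.powerset.erase u.letters).attach,
        gFun F n w₁ (u.restrict U.1)
  else 0
termination_by u.numLetters
decreasing_by
  have hU := U.2
  rw [Finset.mem_erase, Finset.mem_powerset] at hU
  rw [SignedWord.numLetters_restrict u hU.2]
  exact Finset.card_lt_card (HasSubset.Subset.ssubset_of_ne hU.2 hU.1)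

open Classical in
lemma gFun_def (F : Type*) [Field F] (n : ℕ) (w₁ u : SignedWord) :
    gFun F n w₁ u =
      if u.numLetters ≤ n then
        (if u.CyclicEquiv w₁ then (1 : F) else 0) -
          ∑ U ∈ u.letters.powerset.erase u.letters, gFun F n w₁ (u.restrict U)
      else 0 := by
  rw [gFun, Finset.sum_attach (u.letters.powerset.erase u.letters)
    (fun U => gFun F n w₁ (u.restrict U))]

lemma gFun_eq_of_equiv (F : Type*) [Field F] (n : ℕ) (w₁ : SignedWord) :
    ∀ k (u u' : SignedWord), u.numLetters = k → u.CyclicEquiv u' →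
      gFun F n w₁ u = gFun F n w₁ u' := by
  intro k
  induction k using Nat.strong_induction_on with
  | _ k ih =>
    intro u u' hk h
    obtain ⟨σ, hL, hres⟩ := SignedWord.cyclicEquiv_restrict h
    have hcard : u'.numLetters = u.numLetters := by
      rw [SignedWord.numLetters, hL, Finset.card_image_of_injective _ σ.injective]; rfl
    have hL' : u.letters = u'.letters.image σ.symm := by
      rw [hL, image_equiv_image_symm]
    rw [gFun_def, gFun_def, hcard]
    by_cases hn : u.numLetters ≤ n
    · rw [if_pos hn, if_pos hn]
      congr 1
      · have hiff : u.CyclicEquiv w₁ ↔ u'.CyclicEquiv w₁ :=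
          ⟨fun h' => Relation.EqvGen.trans _ _ _ (Relation.EqvGen.symm _ _ h) h',
           fun h' => Relation.EqvGen.trans _ _ _ h h'⟩
        by_cases hcw : u.CyclicEquiv w₁
        · rw [if_pos hcw, if_pos (hiff.mp hcw)]
        · rw [if_neg hcw, if_neg (fun hc => hcw (hiff.mpr hc))]
      · apply Finset.sum_nbij' (fun U => U.image σ) (fun V => V.image σ.symm)
        · intro U hU
          rw [Finset.mem_erase, Finset.mem_powerset] at hU ⊢
          refine ⟨fun hc => hU.1 ?_, by rw [hL]; exact Finset.image_subset_image hU.2⟩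
          rw [hL] at hc
          exact Finset.image_injective σ.injective hc
        · intro V hV
          rw [Finset.mem_erase, Finset.mem_powerset] at hV ⊢
          refine ⟨fun hc => hV.1 ?_, by rw [hL']; exact Finset.image_subset_image hV.2⟩
          rw [hL'] at hc
          exact Finset.image_injective σ.symm.injective hc
        · intro U _; exact image_equiv_image_symm σ U
        · intro V _; exact image_symm_image σ V
        · intro U hU
          rw [Finset.mem_erase, Finset.mem_powerset] at hU
          have hlt : U.card < k := by
            rw [← hk]
            exact Finset.card_lt_card (HasSubset.Subset.ssubset_of_ne hU.2 hU.1)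
          exact ih U.card hlt _ _ (u.numLetters_restrict hU.2) (hres U)
    · rw [if_neg hn, if_neg hn]

end Separation3
section Separation4

open Finset

noncomputable def vFun (F : Type*) [Field F] (n : ℕ) (w₁ : SignedWord) (w : SignedWord) : F :=
  ∑ U ∈ w.letters.powerset, gFun F n w₁ (w.restrict U)

lemma vFun_invariant (F : Type*) [Field F] (n : ℕ) (w₁ : SignedWord) :
    WordInvariant F (vFun F n w₁) := by
  intro w w' h
  obtain ⟨σ, hL, hres⟩ := SignedWord.cyclicEquiv_restrict h
  have hL' : w.letters = w'.letters.image σ.symm := by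
    rw [hL, image_equiv_image_symm]
  apply Finset.sum_nbij' (fun U => U.image σ) (fun V => V.image σ.symm)
  · intro U hU
    rw [Finset.mem_powerset] at hU ⊢
    rw [hL]; exact Finset.image_subset_image hU
  · intro V hV
    rw [Finset.mem_powerset] at hV ⊢
    rw [hL']; exact Finset.image_subset_image hV
  · intro U _; exact image_equiv_image_symm σ U
  · intro V _; exact image_symm_image σ V
  · intro U _
    exact gFun_eq_of_equiv F n w₁ (w.restrict U).numLetters _ _ rfl (hres U)

open Classical in
lemma vFun_small (F : Type*) [Field F] (n : ℕ) (w₁ w : SignedWord) (hw : w.numLetters ≤ n) :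
    vFun F n w₁ w = if w.CyclicEquiv w₁ then (1 : F) else 0 := by
  unfold vFun
  rw [← Finset.add_sum_erase _ _ (Finset.mem_powerset_self w.letters),
    restrict_letters_self, gFun_def, if_pos hw]
  ring

lemma powerset_sdiff (A T : Finset ℕ) :
    (A \ T).powerset = A.powerset.filter fun U => Disjoint U T := by
  ext U
  simp [Finset.subset_sdiff]

lemma sum_powerset_neg_one_F (F : Type*) [Field F] (M : Finset ℕ) :
    (∑ T ∈ M.powerset, (-1 : F) ^ T.card) = if M = ∅ then 1 else 0 := by
  have h1 := Finset.sum_powerset_neg_one_pow_card (x := M)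
  have h2 : ((∑ T ∈ M.powerset, (-1 : ℤ) ^ T.card : ℤ) : F)
      = ∑ T ∈ M.powerset, (-1 : F) ^ T.card := by push_cast; rfl
  rw [← h2, h1]
  split <;> simp

open Classical in
lemma prolong_vFun (F : Type*) [Field F] (n : ℕ) (w₁ w : SignedWord) (S : Finset ℕ) :
    prolong F (vFun F n w₁) w S =
      ∑ U ∈ w.letters.powerset.filter (fun U => S ⊆ U), gFun F n w₁ (w.restrict U) := by
  unfold prolong vFun
  have key : ∀ T ∈ S.powerset,
      (-1 : F) ^ T.card * ∑ U ∈ (w.delete T).letters.powerset,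
          gFun F n w₁ ((w.delete T).restrict U)
      = ∑ U ∈ w.letters.powerset,
          (if Disjoint U T then (-1 : F) ^ T.card * gFun F n w₁ (w.restrict U) else 0) := by
    intro T _
    rw [SignedWord.letters_delete, powerset_sdiff, Finset.sum_filter, Finset.mul_sum]
    apply Finset.sum_congr rfl
    intro U _
    by_cases hd : Disjoint U T
    · rw [if_pos hd, if_pos hd, restrict_delete w hd]
    · rw [if_neg hd, if_neg hd, mul_zero]
  rw [Finset.sum_congr rfl key, Finset.sum_comm, Finset.sum_filter]
  apply Finset.sum_congr rfl
  intro U _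
  have step : (∑ T ∈ S.powerset,
        if Disjoint U T then (-1 : F) ^ T.card * gFun F n w₁ (w.restrict U) else 0)
      = (∑ T ∈ (S \ U).powerset, (-1 : F) ^ T.card) * gFun F n w₁ (w.restrict U) := by
    rw [powerset_sdiff, Finset.sum_filter, Finset.sum_mul]
    apply Finset.sum_congr rfl
    intro T _
    by_cases hd : Disjoint U T
    · rw [if_pos hd, if_pos hd.symm]
    · rw [if_neg hd, if_neg (fun hc : Disjoint T U => hd hc.symm), zero_mul]
  rw [step, sum_powerset_neg_one_F]
  by_cases hSU : S ⊆ U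
  · rw [if_pos (Finset.sdiff_eq_empty_iff_subset.mpr hSU), if_pos hSU, one_mul]
  · rw [if_neg (fun hc => hSU (Finset.sdiff_eq_empty_iff_subset.mp hc)), if_neg hSU, zero_mul]

lemma vFun_finiteType (F : Type*) [Field F] (n : ℕ) (w₁ : SignedWord) :
    FiniteTypeLe F n (vFun F n w₁) := by
  refine ⟨vFun_invariant F n w₁, fun w S _ hc => ?_⟩
  rw [prolong_vFun]
  apply Finset.sum_eq_zero
  intro U hU
  rw [Finset.mem_filter, Finset.mem_powerset] at hU
  have hn : ¬ (w.restrict U).numLetters ≤ n := by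
    rw [w.numLetters_restrict hU.1]
    have := Finset.card_le_card hU.2
    omega
  rw [gFun_def, if_neg hn]

end Separation4
/-- finite type invariants of degree ≤ `n` separate cyclic
equivalence classes of signed words with at most `n` letters. -/
theorem finiteType_separates (F : Type*) [Field F] (n : ℕ) (w₁ w₂ : SignedWord)
    (h₁ : w₁.numLetters ≤ n) (h₂ : w₂.numLetters ≤ n)
    (h : ∀ v : SignedWord → F, FiniteTypeLe F n v → v w₁ = v w₂) :
    w₁.CyclicEquiv w₂ := by
  have hv := h (vFun F n w₁) (vFun_finiteType F n w₁)
  rw [vFun_small F n w₁ w₁ h₁, vFun_small F n w₁ w₂ h₂,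
    if_pos (show w₁.CyclicEquiv w₁ from Relation.EqvGen.refl _)] at hv
  by_contra hne
  rw [if_neg (show ¬ w₂.CyclicEquiv w₁ from fun hc => hne (Relation.EqvGen.symm _ _ hc))] at hv
  exact one_ne_zero hv
end

section
/- Every signed word with exactly one letter is cyclically equivalent to AA (the one-letter positive signed word); in particular AA and ĀĀ (the one-letter negative signed word) are cyclically equivalent. Every signed word with exactly two letters is cyclically equivalent to an isomorphic copy of exactly one of the four signed words AABB, AAB̄B̄, AB̄B̄A, ABAB (where a bar denotes a negative letter and unbarred letters are positive). -/
def pval (s t : Bool) : ℕ := if s = t then (if s then 1 else 3) else 2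
def nval (p q : Bool) : ℕ := if p = q then 2 else (if q then 1 else 3)

def classify : List Letter → ℕ
  | [p, q, r, u] =>
    if p.1 = q.1 ∧ r.1 = u.1 ∧ p.1 ≠ r.1 ∧ p.2 = q.2 ∧ r.2 = u.2 then pval p.2 r.2
    else if p.1 = u.1 ∧ q.1 = r.1 ∧ p.1 ≠ q.1 ∧ p.2 = u.2 ∧ q.2 = r.2 then nval p.2 q.2
    else if p.1 = r.1 ∧ q.1 = u.1 ∧ p.1 ≠ q.1 ∧ p.2 = r.2 ∧ q.2 = u.2 then 4
    else 0
  | _ => 0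

lemma classify_len {w : List Letter} (h : w.length ≠ 4) : classify w = 0 := by
  rcases w with _ | ⟨p, _ | ⟨q, _ | ⟨r, _ | ⟨u, _ | ⟨v, rest⟩⟩⟩⟩⟩ <;> simp_all [classify]

lemma classify_iso {w w' : List Letter} (h : Iso w w') : classify w = classify w' := by
  obtain ⟨f, rfl⟩ := h
  rcases w with _ | ⟨p, _ | ⟨q, _ | ⟨r, _ | ⟨u, _ | ⟨v, rest⟩⟩⟩⟩⟩ <;>
    simp [classify, Equiv.apply_eq_iff_eq]

lemma classify_move02 (a : ℕ) (s : Bool) (c d : Letter) :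
    classify [(a,s),(a,s),c,d] = classify [(a,!s),c,d,(a,!s)] := by
  obtain ⟨c, u⟩ := c; obtain ⟨d, v⟩ := d
  cases s <;> cases u <;> cases v <;>
    by_cases h1 : a = c <;> by_cases h2 : a = d <;> by_cases h3 : c = d <;>
    simp_all [classify, pval, nval] <;> (try split_ifs) <;> omega

lemma classify_move11 (a : ℕ) (s : Bool) (c d : Letter) :
    classify [(a,s),c,(a,s),d] = classify [c,(a,!s),d,(a,!s)] := by
  obtain ⟨c, u⟩ := c; obtain ⟨d, v⟩ := d
  cases s <;> cases u <;> cases v <;>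
    by_cases h1 : a = c <;> by_cases h2 : a = d <;> by_cases h3 : c = d <;>
    simp_all [classify, pval, nval] <;> (try split_ifs) <;> omega

lemma classify_move20 (a : ℕ) (s : Bool) (c d : Letter) :
    classify [(a,s),c,d,(a,s)] = classify [c,d,(a,!s),(a,!s)] := by
  obtain ⟨c, u⟩ := c; obtain ⟨d, v⟩ := d
  cases s <;> cases u <;> cases v <;>
    by_cases h1 : a = c <;> by_cases h2 : a = d <;> by_cases h3 : c = d <;>
    simp_all [classify, pval, nval] <;> (try split_ifs) <;> omega

lemma classify_move {w w' : List Letter} (h : Move w w') : classify w = classify w' := by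
  obtain ⟨a, s, x, y, rfl, rfl⟩ := h
  by_cases hl : x.length + y.length = 2
  · rcases x with _ | ⟨x0, _ | ⟨x1, _ | ⟨x2, x⟩⟩⟩ <;>
      rcases y with _ | ⟨y0, _ | ⟨y1, _ | ⟨y2, y⟩⟩⟩ <;> simp_all <;>
      first
        | exact classify_move02 a s y0 y1
        | exact classify_move11 a s x0 y0
        | exact classify_move20 a s x0 x1
        | (rw [classify_len, classify_len] <;> simp <;> omega)
  · rw [classify_len, classify_len] <;> simp <;> omega

lemma classify_cyc {w w' : List Letter} (h : CyclicEquivL w w') :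
    classify w = classify w' := by
  induction h with
  | rel _ _ h => exact h.elim classify_iso classify_move
  | refl => rfl
  | symm _ _ _ ih => exact ih.symm
  | trans _ _ _ _ _ ih1 ih2 => exact ih1.trans ih2

def cW (i : Fin 4) : List Letter :=
  (![wordAABB, wordAABnBn, wordABnBnA, wordABAB] i).1

lemma step_iso {w w' : List Letter} (h : Iso w w') : CyclicEquivL w w' :=
  Relation.EqvGen.rel _ _ (Or.inl h)
lemma step_move {w w' : List Letter} (h : Move w w') : CyclicEquivL w w' :=
  Relation.EqvGen.rel _ _ (Or.inr h)
lemma ceq_trans {a b c : List Letter} (h : CyclicEquivL a b) (h' : CyclicEquivL b c) :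
    CyclicEquivL a c := Relation.EqvGen.trans _ _ _ h h'
lemma ceq_symm {a b : List Letter} (h : CyclicEquivL a b) : CyclicEquivL b a :=
  Relation.EqvGen.symm _ _ h

def Pw (s t : Bool) : List Letter := [(0,s),(0,s),(1,t),(1,t)]
def Nw (p q : Bool) : List Letter := [(0,p),(1,q),(1,q),(0,p)]
def Iw (s t : Bool) : List Letter := [(0,s),(1,t),(0,s),(1,t)]

lemma iso4 (a b c d : Bool) : Iso [(1,a),(1,b),(0,c),(0,d)] [(0,a),(0,b),(1,c),(1,d)] :=
  ⟨Equiv.swap 0 1, by norm_num [Equiv.swap_apply_left, Equiv.swap_apply_right]⟩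
lemma iso4' (a b c d : Bool) : Iso [(1,a),(0,b),(1,c),(0,d)] [(0,a),(1,b),(0,c),(1,d)] :=
  ⟨Equiv.swap 0 1, by norm_num [Equiv.swap_apply_left, Equiv.swap_apply_right]⟩

lemma eqvPN (s t : Bool) : CyclicEquivL (Pw s t) (Nw (!s) t) :=
  step_move ⟨0, s, [], [(1,t),(1,t)], rfl, rfl⟩
lemma eqvNP (p q : Bool) : CyclicEquivL (Nw p q) (Pw q (!p)) :=
  ceq_trans (step_move ⟨0, p, [(1,q),(1,q)], [], rfl, rfl⟩) (step_iso (iso4 q q (!p) (!p)))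
lemma eqvII (s t : Bool) : CyclicEquivL (Iw s t) (Iw t (!s)) :=
  ceq_trans (step_move ⟨0, s, [(1,t)], [(1,t)], rfl, rfl⟩) (step_iso (iso4' t (!s) t (!s)))

lemma exists_f (a b : ℕ) (hab : a ≠ b) : ∃ f : ℕ ≃ ℕ, f a = 0 ∧ f b = 1 := by
  refine ⟨(Equiv.swap a 0).trans (Equiv.swap ((Equiv.swap a 0) b) 1), ?_, by simp⟩
  have h1 : (Equiv.swap a 0) b ≠ 0 := by
    simp [Equiv.swap_apply_def]
    split_ifs <;> simp_all <;> omega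
  simp [Equiv.swap_apply_of_ne_of_ne h1.symm one_ne_zero.symm]

lemma exun {w v : List Letter} (h : CyclicEquivL w v) (i : Fin 4)
    (hv : CyclicEquivL v (cW i)) : ∃! j : Fin 4, CyclicEquivL w (cW j) := by
  refine ⟨i, ceq_trans h hv, fun j hj => ?_⟩
  have hc := classify_cyc (ceq_trans (ceq_symm hj) (ceq_trans h hv))
  fin_cases i <;> fin_cases j <;> first | rfl | (exfalso; revert hc; decide)

lemma mainP (a b : ℕ) (s t : Bool) (hab : a ≠ b) :
    ∃! i : Fin 4, CyclicEquivL [(a,s),(a,s),(b,t),(b,t)] (cW i) := by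
  obtain ⟨f, hfa, hfb⟩ := exists_f a b hab
  have h : CyclicEquivL [(a,s),(a,s),(b,t),(b,t)] (Pw s t) :=
    step_iso ⟨f, by simp [Pw, hfa, hfb]⟩
  cases s <;> cases t
  · exact exun h 2 (eqvPN false false)
  · exact exun h 1 (ceq_trans (eqvPN false true) (eqvNP true true))
  · exact exun h 1 (Relation.EqvGen.refl _)
  · exact exun h 0 (Relation.EqvGen.refl _)

lemma mainN (a b : ℕ) (s t : Bool) (hab : a ≠ b) :
    ∃! i : Fin 4, CyclicEquivL [(a,s),(b,t),(b,t),(a,s)] (cW i) := by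
  obtain ⟨f, hfa, hfb⟩ := exists_f a b hab
  have h : CyclicEquivL [(a,s),(b,t),(b,t),(a,s)] (Nw s t) :=
    step_iso ⟨f, by simp [Nw, hfa, hfb]⟩
  cases s <;> cases t
  · exact exun h 1 (ceq_trans (eqvNP false false)
      (ceq_trans (eqvPN false true) (eqvNP true true)))
  · exact exun h 0 (eqvNP false true)
  · exact exun h 2 (Relation.EqvGen.refl _)
  · exact exun h 1 (eqvNP true true)

lemma mainI (a b : ℕ) (s t : Bool) (hab : a ≠ b) :
    ∃! i : Fin 4, CyclicEquivL [(a,s),(b,t),(a,s),(b,t)] (cW i) := by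
  obtain ⟨f, hfa, hfb⟩ := exists_f a b hab
  have h : CyclicEquivL [(a,s),(b,t),(a,s),(b,t)] (Iw s t) :=
    step_iso ⟨f, by simp [Iw, hfa, hfb]⟩
  cases s <;> cases t
  · exact exun h 3 (ceq_trans (eqvII false false) (eqvII false true))
  · exact exun h 3 (eqvII false true)
  · exact exun h 3 (ceq_trans (eqvII true false)
      (ceq_trans (eqvII false false) (eqvII false true)))
  · exact exun h 3 (Relation.EqvGen.refl _)

lemma one_letter (w : List Letter) (hw : IsSignedWord w) (hn : (lettersL w).card = 1) :
    CyclicEquivL w wordAA.1 := by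
  obtain ⟨a, hset⟩ := Finset.card_eq_one.mp hn
  have ha : a ∈ lettersL w := hset ▸ Finset.mem_singleton_self a
  rw [lettersL, List.mem_toFinset, List.mem_map] at ha
  obtain ⟨⟨a', s⟩, hpmem, hpa⟩ := ha
  dsimp at hpa; subst hpa; rename' a' => a
  have key : ∀ r ∈ w, r = (a, s) := by
    intro r hr
    have hr1 : r.1 ∈ lettersL w := List.mem_toFinset.mpr (List.mem_map_of_mem (f := Prod.fst) hr)
    rw [hset, Finset.mem_singleton] at hr1
    exact Prod.ext_iff.mpr ⟨hr1, (hw (a, s) hpmem).2 r hr hr1⟩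
  have hlen : w.length = 2 := by
    rw [← List.count_eq_length.mpr (fun b hb => (key b hb).symm)]
    exact (hw _ hpmem).1
  have hw2 : w = [(a, s), (a, s)] :=
    List.eq_replicate_iff.mpr ⟨hlen, key⟩
  have h : CyclicEquivL w [(0, s), (0, s)] :=
    step_iso ⟨Equiv.swap a 0, by simp [hw2]⟩
  cases s
  · exact ceq_trans h (step_move ⟨0, false, [], [], rfl, rfl⟩)
  · exact h

lemma two_letter (w : List Letter) (hw : IsSignedWord w) (hn : (lettersL w).card = 2) :
    ∃! i : Fin 4, CyclicEquivL w (cW i) := by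
  obtain ⟨a, b, hab, hset⟩ := Finset.card_eq_two.mp hn
  have ha : a ∈ lettersL w := hset ▸ Finset.mem_insert_self a {b}
  have hb : b ∈ lettersL w := hset ▸ by simp
  rw [lettersL, List.mem_toFinset, List.mem_map] at ha hb
  obtain ⟨⟨a', s⟩, hAmem, hpa⟩ := ha
  obtain ⟨⟨b', t⟩, hBmem, hqb⟩ := hb
  dsimp at hpa hqb; subst hpa; subst hqb; rename' a' => a, b' => b
  have hne : ((a, s) : Letter) ≠ (b, t) := fun h => hab (congrArg Prod.fst h)
  have key : ∀ r ∈ w, r = (a, s) ∨ r = (b, t) := by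
    intro r hr
    have hr1 : r.1 ∈ lettersL w := List.mem_toFinset.mpr (List.mem_map_of_mem (f := Prod.fst) hr)
    rw [hset, Finset.mem_insert, Finset.mem_singleton] at hr1
    rcases hr1 with h | h
    · exact Or.inl (Prod.ext_iff.mpr ⟨h, (hw (a, s) hAmem).2 r hr h⟩)
    · exact Or.inr (Prod.ext_iff.mpr ⟨h, (hw (b, t) hBmem).2 r hr h⟩)
  have hcA : w.count (a, s) = 2 := (hw _ hAmem).1
  have hcB : w.count (b, t) = 2 := (hw _ hBmem).1
  have hlen : w.length = 4 := by
    have h1 : w.countP (· == ((a, s) : Letter)) = 2 := hcA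
    have h2 : w.countP (fun x => !(x == ((a, s) : Letter))) = 2 := by
      rw [List.countP_congr (q := (· == ((b, t) : Letter)))
        (fun x hx => by rcases key x hx with rfl | rfl <;> simp [hne, hne.symm])]
      exact hcB
    have h3 := List.length_eq_countP_add_countP (· == ((a, s) : Letter)) (l := w)
    simp only [decide_not, Bool.decide_eq_true] at h3
    omega
  rcases w with _ | ⟨p1, _ | ⟨p2, _ | ⟨p3, _ | ⟨p4, _ | ⟨p5, rest⟩⟩⟩⟩⟩ <;>
    simp only [List.length] at hlen <;> try omega
  rcases key p1 (by simp) with rfl | rfl <;>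
    rcases key p2 (by simp) with rfl | rfl <;>
      rcases key p3 (by simp) with rfl | rfl <;>
        rcases key p4 (by simp) with rfl | rfl <;>
    first
      | exact mainP a b s t hab
      | exact mainP b a t s hab.symm
      | exact mainN a b s t hab
      | exact mainN b a t s hab.symm
      | exact mainI a b s t hab
      | exact mainI b a t s hab.symm
      | (exfalso; revert hcA hcB; simp [List.count_cons, hne, hne.symm])

/-- every one-letter signed word is cyclically equivalent to `AA`
(in particular `AA ~ ĀĀ`), and every two-letter signed word is cyclically
equivalent to (an isomorphic copy of) exactly one of
`AABB`, `AAB̄B̄`, `AB̄B̄A`, `ABAB`. -/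
theorem classification_of_small_words :
    (∀ w : SignedWord, w.numLetters = 1 → w.CyclicEquiv wordAA) ∧
    wordAA.CyclicEquiv wordAAneg ∧
    (∀ w : SignedWord, w.numLetters = 2 →
      ∃! i : Fin 4, w.CyclicEquiv (![wordAABB, wordAABnBn, wordABnBnA, wordABAB] i)) := by
  refine ⟨fun w h => one_letter w.1 w.2 h, ?_, fun w h => two_letter w.1 w.2 h⟩
  exact step_move ⟨0, true, [], [], rfl, rfl⟩
end
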